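/- Suppose Y =d X↓^μ is a rearrangement of the i.u.d. sequence X = (X_1,...,X_n) such that: the k-th position of Y is fixed, i.e., P(μ_k = ℓ) = 1 for some ℓ, and the initial ranks R_j(Y) for j = k, k+1, ..., n are independent. Then each partial rank R_{k,j}(Y) for j = k,...,n is fixed: it almost surely takes a single value. -/

import Mathlib

open MeasureTheory

/-- `X = (X_1,...,X_n)` is i.u.d. -/
def IsIUD {Ω : Type} [MeasurableSpace Ω] (P : Measure Ω) {n : ℕ}
    (X : Ω → Fin n → ℝ) : Prop :=
  (∀ i, Measurable fun ω => X ω i) ∧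
  ProbabilityTheory.iIndepFun (fun i ω => X ω i) P ∧
  ∀ i, P.map (fun ω => X ω i) = volume.restrict (Set.Icc (0:ℝ) 1)

/-- The ascending arrangement of a tuple. -/
noncomputable def ascArr (n : ℕ) (a : Fin n → ℝ) : Fin n → ℝ := a ∘ Tuple.sort a

/-- The descending arrangement of a tuple. -/
noncomputable def descArr (n : ℕ) (a : Fin n → ℝ) : Fin n → ℝ := fun i => ascArr n a i.rev

/-- The partial rank (0-indexed: `prank y j k` is the paper's
`R_{j+1,k+1}(y) = 1 + #{i ≤ k : y_i > y_j}`, with `1`-based indices). -/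
noncomputable def prank {n : ℕ} (y : Fin n → ℝ) (j k : Fin n) : ℕ :=
  1 + (Finset.univ.filter (fun i : Fin n => i ≤ k ∧ y j < y i)).card

/-- The initial rank (0-indexed: `irank y k` is the paper's `R_{k+1}`). -/
noncomputable def irank {n : ℕ} (y : Fin n → ℝ) (k : Fin n) : ℕ :=
  1 + (Finset.univ.filter (fun i : Fin n => i < k ∧ y k < y i)).card

namespace RankAux

variable {n : ℕ}

lemma prank_self (y : Fin n → ℝ) (k : Fin n) : prank y k k = irank y k := by
  unfold prank irank
  congr 1
  apply Finset.card_nbij id (by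
    intro i hi
    simp only [Finset.mem_coe, Finset.mem_filter, Finset.mem_univ, true_and] at hi ⊢
    rcases lt_or_eq_of_le hi.1 with h | h
    · exact ⟨h, hi.2⟩
    · exact absurd (h ▸ hi.2) (lt_irrefl _))
  · intro a _ b _ h; exact h
  · intro i hi
    simp only [Finset.coe_filter, Set.mem_setOf_eq, Finset.mem_univ, true_and, Set.mem_image] at hi ⊢
    exact ⟨i, ⟨le_of_lt hi.1, hi.2⟩, rfl⟩

lemma prank_succ (y : Fin n → ℝ) (hy : Function.Injective y) (k : Fin n) (j : ℕ)
    (hk : (k:ℕ) ≤ j) (hj : j + 1 < n) :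
    prank y k ⟨j+1, hj⟩ = prank y k ⟨j, Nat.lt_of_succ_lt hj⟩ +
      (if irank y ⟨j+1, hj⟩ ≤ prank y k ⟨j, Nat.lt_of_succ_lt hj⟩ then 1 else 0) := by
  set J : Fin n := ⟨j, Nat.lt_of_succ_lt hj⟩
  set J' : Fin n := ⟨j+1, hj⟩
  have hJJ' : ∀ i : Fin n, i ≤ J' ↔ i ≤ J ∨ i = J' := by
    intro i
    constructor
    · intro h
      rcases lt_or_eq_of_le h with h | h
      · left; exact Fin.le_def.2 (Nat.lt_succ_iff.1 (Fin.lt_def.1 h))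
      · right; exact h
    · rintro (h | rfl)
      · exact le_of_lt (Fin.lt_def.2 (Nat.lt_succ_of_le (Fin.le_def.1 h)))
      · exact le_refl _
  have hiJ' : ∀ i : Fin n, i < J' ↔ i ≤ J := by
    intro i; rw [Fin.lt_def, Fin.le_def]; exact Nat.lt_succ_iff
  -- split the card
  have hsplit : (Finset.univ.filter (fun i : Fin n => i ≤ J' ∧ y k < y i)).card
      = (Finset.univ.filter (fun i : Fin n => i ≤ J ∧ y k < y i)).card
        + (if y k < y J' then 1 else 0) := by
    by_cases h : y k < y J'
    · rw [if_pos h]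
      have : Finset.univ.filter (fun i : Fin n => i ≤ J' ∧ y k < y i)
          = insert J' (Finset.univ.filter (fun i : Fin n => i ≤ J ∧ y k < y i)) := by
        ext i
        simp only [Finset.mem_filter, Finset.mem_univ, true_and, Finset.mem_insert, hJJ']
        constructor
        · rintro ⟨h1 | h1, h2⟩
          · exact Or.inr ⟨h1, h2⟩
          · exact Or.inl h1
        · rintro (rfl | ⟨h1, h2⟩)
          · exact ⟨Or.inr rfl, h⟩
          · exact ⟨Or.inl h1, h2⟩
      rw [this, Finset.card_insert_of_notMem]
      simp only [Finset.mem_filter, Finset.mem_univ, true_and, not_and]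
      intro hle
      have h4 := Fin.le_def.1 hle
      simp only [J, J'] at h4
      omega
    · rw [if_neg h, Nat.add_zero]
      congr 1
      ext i
      simp only [Finset.mem_filter, Finset.mem_univ, true_and, hJJ']
      constructor
      · rintro ⟨h1 | rfl, h2⟩
        · exact ⟨h1, h2⟩
        · exact absurd h2 h
      · rintro ⟨h1, h2⟩; exact ⟨Or.inl h1, h2⟩
  -- the comparison with the rank
  have hcmp : y k < y J' ↔ irank y J' ≤ prank y k J := by
    have hirank : irank y J' = 1 + (Finset.univ.filter (fun i : Fin n => i ≤ J ∧ y J' < y i)).card := by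
      unfold irank; congr 2; ext i
      simp only [Finset.mem_filter, Finset.mem_univ, true_and, hiJ' i]
    constructor
    · intro h
      rw [hirank]
      unfold prank
      apply Nat.add_le_add_left
      apply Finset.card_le_card
      intro i hi
      simp only [Finset.mem_filter, Finset.mem_univ, true_and] at hi ⊢
      exact ⟨hi.1, lt_trans h hi.2⟩
    · intro h
      by_contra hlt
      have hne : y J' ≠ y k := fun he => by
        have h2 : J' = k := hy he
        have h3 : (J' : ℕ) = (k : ℕ) := congrArg Fin.val h2
        simp only [J'] at h3
        omega
      have hgt : y J' < y k := lt_of_le_of_ne (not_lt.1 hlt) hne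
      have hstrict : (Finset.univ.filter (fun i : Fin n => i ≤ J ∧ y k < y i)).card
          < (Finset.univ.filter (fun i : Fin n => i ≤ J ∧ y J' < y i)).card := by
        apply Finset.card_lt_card
        constructor
        · intro i hi
          simp only [Finset.mem_filter, Finset.mem_univ, true_and] at hi ⊢
          exact ⟨hi.1, lt_trans hgt hi.2⟩
        · intro hsub
          have hkmem : k ∈ Finset.univ.filter (fun i : Fin n => i ≤ J ∧ y J' < y i) := by
            simp only [Finset.mem_filter, Finset.mem_univ, true_and]
            exact ⟨Fin.le_def.2 hk, hgt⟩
          have := hsub hkmem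
          simp only [Finset.mem_filter, Finset.mem_univ, true_and] at this
          exact lt_irrefl _ this.2
      rw [hirank] at h
      unfold prank at h
      omega
  have hfin : prank y k J' = prank y k J + (if y k < y J' then 1 else 0) := by
    unfold prank; rw [hsplit]; ring
  rw [hfin, if_congr hcmp rfl rfl]


lemma measurable_rank_aux (p : Fin n → Fin n → Prop) [∀ j i, Decidable (p j i)] (k : Fin n) :
    Measurable fun y : Fin n → ℝ =>
      1 + (Finset.univ.filter (fun i : Fin n => p k i ∧ y k < y i)).card := by
  apply Measurable.const_add
  have : (fun y : Fin n → ℝ => (Finset.univ.filter (fun i : Fin n => p k i ∧ y k < y i)).card)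
      = fun y => ∑ i : Fin n, if p k i ∧ y k < y i then 1 else 0 := by
    funext y; rw [Finset.card_filter]
  rw [this]
  apply Finset.measurable_sum
  intro i _
  by_cases h : p k i
  · simp only [h, true_and]
    exact Measurable.ite (measurableSet_lt (measurable_pi_apply k) (measurable_pi_apply i))
      measurable_const measurable_const
  · simp only [h, false_and, if_false]
    exact measurable_const

lemma measurable_irank (k : Fin n) : Measurable fun y : Fin n → ℝ => irank y k :=
  measurable_rank_aux (fun k i => i < k) k

lemma measurable_prank (k j : Fin n) : Measurable fun y : Fin n → ℝ => prank y k j := by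
  have h := measurable_rank_aux (fun k i => i ≤ j) k
  convert h using 2
  rfl

lemma strictAnti_descArr (x : Fin n → ℝ) (hx : Function.Injective x) :
    StrictAnti (descArr n x) := by
  have hmono : Monotone (ascArr n x) := Tuple.monotone_sort x
  have hinj : Function.Injective (ascArr n x) := hx.comp (Tuple.sort x).injective
  have hsm : StrictMono (ascArr n x) := hmono.strictMono_of_injective hinj
  intro i j hij
  exact hsm (by rw [Fin.lt_def] at hij ⊢; simp only [Fin.val_rev]; omega)

lemma prank_last (x : Fin n → ℝ) (hx : Function.Injective x) (s : Equiv.Perm (Fin n))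
    (k ℓ : Fin n) (hs : s k = ℓ) (hn : 0 < n) :
    prank (fun i => descArr n x (s i)) k ⟨n-1, by omega⟩ = (ℓ:ℕ) + 1 := by
  have hD := strictAnti_descArr x hx
  unfold prank
  have hall : ∀ i : Fin n, i ≤ (⟨n-1, by omega⟩ : Fin n) := by
    intro i; rw [Fin.le_def]; exact Nat.le_sub_one_of_lt i.isLt
  have heq : Finset.univ.filter
      (fun i : Fin n => i ≤ (⟨n-1, by omega⟩ : Fin n) ∧ descArr n x (s k) < descArr n x (s i))
      = Finset.univ.filter (fun i : Fin n => s i < ℓ) := by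
    ext i
    simp only [Finset.mem_filter, Finset.mem_univ, true_and, hall i, true_and, hs]
    exact ⟨fun h => hD.lt_iff_gt.1 h, fun h => hD h⟩
  rw [heq]
  have hcard : (Finset.univ.filter (fun i : Fin n => s i < ℓ)).card
      = (Finset.univ.filter (fun i : Fin n => i < ℓ)).card := by
    apply Finset.card_nbij (fun i => s i)
    · intro i hi; simpa using (by simpa using hi : s i < ℓ)
    · intro a _ b _ h; exact s.injective h
    · intro i hi
      simp only [Finset.coe_filter, Set.mem_setOf_eq, Finset.mem_univ, true_and,
        Set.mem_image] at hi ⊢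
      exact ⟨s.symm i, by simpa using hi, by simp⟩
  rw [hcard]
  have : Finset.univ.filter (fun i : Fin n => i < ℓ) = Finset.Iio ℓ := by
    ext i; simp
  rw [this, Fin.card_Iio]
  omega

/-- the update step of partial ranks -/
def step (u v : ℕ) : ℕ := v + if u ≤ v then 1 else 0

lemma step_strictMono (u : ℕ) : StrictMono (step u) := by
  apply strictMono_nat_of_lt_succ
  intro v
  unfold step
  by_cases h : u ≤ v
  · rw [if_pos h, if_pos (le_trans h (Nat.le_succ v))]; omega
  · rw [if_neg h]; omega

/-- the pure fold computing partial ranks from initial ranks -/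
def gseq (r : ℕ → ℕ) : ℕ → ℕ
  | 0 => r 0
  | (m+1) => step (r (m+1)) (gseq r m)

lemma gseq_congr (r r' : ℕ → ℕ) (m : ℕ) (h : ∀ i ≤ m, r i = r' i) :
    gseq r m = gseq r' m := by
  induction m with
  | zero => exact h 0 le_rfl
  | succ m ih =>
    unfold gseq
    rw [ih (fun i hi => h i (Nat.le_succ_of_le hi)), h (m+1) le_rfl]

lemma prob_eq_one_of_ae {Ω : Type} [MeasurableSpace Ω] (P : Measure Ω) [IsProbabilityMeasure P]
    {p : Ω → Prop} (h : ∀ᵐ ω ∂P, p ω) : P {ω | p ω} = 1 := by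
  have h0 : P {ω | ¬ p ω} = 0 := by rw [MeasureTheory.ae_iff] at h; exact h
  apply le_antisymm prob_le_one
  have : (Set.univ : Set Ω) ⊆ {ω | p ω} ∪ {ω | ¬ p ω} := by
    intro ω _; by_cases hp : p ω
    · exact Or.inl hp
    · exact Or.inr hp
  calc (1:ENNReal) = P Set.univ := (measure_univ).symm
    _ ≤ P ({ω | p ω} ∪ {ω | ¬ p ω}) := measure_mono this
    _ ≤ P {ω | p ω} + P {ω | ¬ p ω} := measure_union_le _ _
    _ = P {ω | p ω} := by rw [h0, add_zero]


lemma prob_ae_iff {Ω : Type} [MeasurableSpace Ω] (P : Measure Ω) [IsProbabilityMeasure P]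
    {p : Ω → Prop} (h : MeasurableSet {ω | p ω}) : P {ω | p ω} = 1 ↔ P {ω | ¬ p ω} = 0 := by
  rw [← prob_compl_eq_zero_iff h, Set.compl_setOf]

lemma const_of_step {Ω : Type} [MeasurableSpace Ω] (P : Measure Ω) [IsProbabilityMeasure P]
    (U V : Ω → ℕ) (hU : Measurable U) (hV : Measurable V)
    (hUV : ProbabilityTheory.IndepFun U V P) (c : ℕ)
    (hc : ∀ᵐ ω ∂P, step (U ω) (V ω) = c) :
    ∃ a, P {ω | V ω = a} = 1 := by
  have hNat : ∀ s : Set ℕ, MeasurableSet s := fun s => s.to_countable.measurableSet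
  by_contra hno
  push_neg at hno
  have hVle : ∀ᵐ ω ∂P, V ω ≤ c := hc.mono (fun ω h => by unfold step at h; omega)
  have hVgt : P {ω | ¬ V ω ≤ c} = 0 := by rw [MeasureTheory.ae_iff] at hVle; exact hVle
  -- an atom exists
  have hatom : ∀ s : Finset ℕ, (0:ENNReal) < P {ω | V ω ∈ s} → ∃ a ∈ s, P {ω | V ω = a} ≠ 0 := by
    intro s hs
    by_contra hz
    push_neg at hz
    have hsub : {ω | V ω ∈ s} ⊆ ⋃ a ∈ s, {ω | V ω = a} := by
      intro ω hω; exact Set.mem_biUnion hω rfl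
    have : P {ω | V ω ∈ s} ≤ ∑ a ∈ s, P {ω | V ω = a} :=
      le_trans (measure_mono hsub) (measure_biUnion_finset_le s _)
    rw [Finset.sum_eq_zero (fun a ha => hz a ha)] at this
    exact absurd (le_antisymm this zero_le) (ne_of_gt hs)
  have h1 : P {ω | V ω ∈ Finset.range (c+1)} = 1 := by
    have : {ω | V ω ≤ c} = {ω | V ω ∈ Finset.range (c+1)} := by
      ext ω; simp [Nat.lt_succ_iff]
    rw [← this]; exact prob_eq_one_of_ae P hVle
  obtain ⟨a, _, ha⟩ := hatom (Finset.range (c+1)) (by rw [h1]; norm_num)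
  -- a second atom exists
  have hb : ∃ b ∈ (Finset.range (c+1)).erase a, P {ω | V ω = b} ≠ 0 := by
    apply hatom
    have hne : P {ω | V ω ≠ a} ≠ 0 := by
      intro h0
      exact hno a ((prob_ae_iff (p := fun ω => V ω = a) P (hV (hNat {a}))).2 h0)
    have hsplit : {ω | V ω ≠ a} ⊆ {ω | V ω ∈ (Finset.range (c+1)).erase a} ∪ {ω | ¬ V ω ≤ c} := by
      intro ω hω
      by_cases h : V ω ≤ c
      · left; simp only [Set.mem_setOf_eq, Finset.mem_erase, Finset.mem_range]
        exact ⟨hω, Nat.lt_succ_of_le h⟩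
      · right; exact h
    have h5 : P {ω | V ω ≠ a} ≤ P {ω | V ω ∈ (Finset.range (c+1)).erase a} + P {ω | ¬ V ω ≤ c} :=
      le_trans (measure_mono hsplit) (measure_union_le _ _)
    rw [hVgt, add_zero] at h5
    exact lt_of_lt_of_le (pos_iff_ne_zero.2 hne) h5
  obtain ⟨b, hbmem, hbpos⟩ := hb
  have hab : b ≠ a := (Finset.mem_erase.1 hbmem).1
  -- full-measure events
  have hfull : ∀ x : ℕ, P {ω | V ω = x} ≠ 0 → P {ω | step (U ω) x = c} = 1 := by
    intro x hx
    have hind := (ProbabilityTheory.indepFun_iff_measure_inter_preimage_eq_mul.1 hUV)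
      {u | ¬ step u x = c} {x} (hNat _) (hNat _)
    have hnull : P (U ⁻¹' {u | ¬ step u x = c} ∩ V ⁻¹' {x}) = 0 := by
      apply measure_mono_null _ (by rw [MeasureTheory.ae_iff] at hc; exact hc)
      rintro ω ⟨h1, h2⟩
      simp only [Set.mem_preimage, Set.mem_setOf_eq, Set.mem_singleton_iff] at h1 h2
      simp only [Set.mem_setOf_eq, h2]
      exact h1
    rw [hind] at hnull
    rcases mul_eq_zero.1 hnull with h | h
    · exact (prob_ae_iff (p := fun ω => step (U ω) x = c) P (hU (hNat {u | step u x = c}))).2 h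
    · exact absurd (h : P {ω | V ω = x} = 0) hx
  have hfa := hfull a ha
  have hfb := hfull b hbpos
  -- intersection nonempty
  have hinter : ({ω | step (U ω) a = c} ∩ {ω | step (U ω) b = c}).Nonempty := by
    rw [Set.nonempty_iff_ne_empty]
    intro hemp
    have hsub : (Set.univ : Set Ω) ⊆ {ω | step (U ω) a = c}ᶜ ∪ {ω | step (U ω) b = c}ᶜ := by
      intro ω _
      by_cases h : ω ∈ {ω | step (U ω) a = c}
      · right
        intro hb2
        exact absurd (Set.mem_inter h hb2) (by rw [hemp]; exact Set.notMem_empty ω)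
      · left; exact h
    have hca : P ({ω | step (U ω) a = c}ᶜ) = 0 := by
      rw [Set.compl_setOf]
      exact (prob_ae_iff (p := fun ω => step (U ω) a = c) P (hU (hNat {u | step u a = c}))).1 hfa
    have hcb : P ({ω | step (U ω) b = c}ᶜ) = 0 := by
      rw [Set.compl_setOf]
      exact (prob_ae_iff (p := fun ω => step (U ω) b = c) P (hU (hNat {u | step u b = c}))).1 hfb
    have : (1:ENNReal) ≤ 0 := by
      calc (1:ENNReal) = P Set.univ := measure_univ.symm
        _ ≤ P ({ω | step (U ω) a = c}ᶜ ∪ {ω | step (U ω) b = c}ᶜ) := measure_mono hsub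
        _ ≤ _ + _ := measure_union_le _ _
        _ = 0 := by rw [hca, hcb, add_zero]
    norm_num at this
  obtain ⟨ω, hωa, hωb⟩ := hinter
  exact hab ((step_strictMono (U ω)).injective (hωb.trans hωa.symm))


lemma ae_injective {Ω₁ : Type} [MeasurableSpace Ω₁] (P₁ : Measure Ω₁) [IsProbabilityMeasure P₁]
    {n : ℕ} (X : Ω₁ → Fin n → ℝ) (hX : IsIUD P₁ X) :
    ∀ᵐ ω ∂P₁, Function.Injective (X ω) := by
  obtain ⟨hmeas, hindep, hunif⟩ := hX
  have key : ∀ i j : Fin n, i ≠ j → ∀ᵐ ω ∂P₁, X ω i ≠ X ω j := by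
    intro i j hij
    have hI : ProbabilityTheory.IndepFun (fun ω => X ω i) (fun ω => X ω j) P₁ :=
      hindep.indepFun hij
    have hmap : P₁.map (fun ω => (X ω i, X ω j))
        = (P₁.map (fun ω => X ω i)).prod (P₁.map (fun ω => X ω j)) :=
      (ProbabilityTheory.indepFun_iff_map_prod_eq_prod_map_map
        (hmeas i).aemeasurable (hmeas j).aemeasurable).1 hI
    have hdiag : MeasurableSet {p : ℝ × ℝ | p.1 = p.2} :=
      measurableSet_eq_fun measurable_fst measurable_snd
    have h0 : P₁ {ω | X ω i = X ω j} = 0 := by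
      have hpre : {ω | X ω i = X ω j} = (fun ω => (X ω i, X ω j)) ⁻¹' {p : ℝ × ℝ | p.1 = p.2} := rfl
      rw [hpre, ← Measure.map_apply ((hmeas i).prodMk (hmeas j)) hdiag, hmap,
        hunif i, hunif j, Measure.prod_apply hdiag]
      have hz : ∀ a : ℝ,
          (volume.restrict (Set.Icc (0:ℝ) 1)) (Prod.mk a ⁻¹' {p : ℝ × ℝ | p.1 = p.2}) = 0 := by
        intro a
        have : Prod.mk a ⁻¹' {p : ℝ × ℝ | p.1 = p.2} = {a} := by
          ext b; simp [eq_comm]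
        rw [this, Measure.restrict_apply (measurableSet_singleton a)]
        exact measure_mono_null Set.inter_subset_left (Real.volume_singleton)
      simp [hz]
    rw [MeasureTheory.ae_iff]
    convert h0 using 2
    ext ω; simp
  have hall : ∀ᵐ ω ∂P₁, ∀ i j : Fin n, i ≠ j → X ω i ≠ X ω j := by
    rw [MeasureTheory.ae_all_iff]
    intro i
    rw [MeasureTheory.ae_all_iff]
    intro j
    by_cases hij : i = j
    · filter_upwards with ω h; exact absurd hij h
    · filter_upwards [key i j hij] with ω h _; exact h
  filter_upwards [hall] with ω h
  intro a b hab
  by_contra hne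
  exact h a b hne hab

end RankAux

open RankAux

/-- Suppose `Y =d X↓^μ` is a rearrangement of the i.u.d. sequence `X` such that the
`k`-th position of `Y` is fixed (`P(μ_k = ℓ) = 1` for some `ℓ`) and the initial ranks
`R_j(Y)`, `j = k,...,n`, are independent.  Then each partial rank `R_{k,j}(Y)`,
`j = k,...,n`, is fixed: it almost surely takes a single value. -/
theorem fixed_position_partial_ranks_fixed {n : ℕ}
    {Ω₁ : Type} [MeasurableSpace Ω₁] (P₁ : Measure Ω₁) [IsProbabilityMeasure P₁]
    (X : Ω₁ → Fin n → ℝ) (hX : IsIUD P₁ X)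
    (μ : Ω₁ → Equiv.Perm (Fin n))
    (hμmeas : ∀ s : Equiv.Perm (Fin n), MeasurableSet {ω | μ ω = s})
    {Ω₂ : Type} [MeasurableSpace Ω₂] (P₂ : Measure Ω₂) [IsProbabilityMeasure P₂]
    (Y : Ω₂ → Fin n → ℝ) (hY : Measurable Y)
    (hlaw : P₂.map Y = P₁.map (fun ω i => descArr n (X ω) (μ ω i)))
    (k : Fin n) (ℓ : Fin n) (hfix : P₁ {ω | μ ω k = ℓ} = 1)
    (hind : ProbabilityTheory.iIndepFun
      (fun (j : {j : Fin n // k ≤ j}) ω => irank (Y ω) j.1) P₂) :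
    ∀ j : Fin n, k ≤ j → ∃ r : ℕ, P₂ {ω | prank (Y ω) k j = r} = 1 := by

  classical
  have npos : 0 < n := k.pos
  have hkn : (k:ℕ) < n := k.isLt
  have hNat : ∀ s : Set ℕ, MeasurableSet s := fun s => s.to_countable.measurableSet
  set Z : Ω₁ → Fin n → ℝ := fun ω i => descArr n (X ω) (μ ω i) with hZdef
  -- Z is a.e.-measurable, else the law equation is absurd
  have hZae : AEMeasurable Z P₁ := by
    by_contra h
    rw [Measure.map_of_not_aemeasurable h] at hlaw
    have h1 : P₂.map Y Set.univ = 1 := by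
      rw [Measure.map_apply hY MeasurableSet.univ]; simp
    rw [hlaw] at h1
    simp at h1
  set jmax : Fin n := ⟨n-1, by omega⟩ with hjmaxdef
  set G : Set (Fin n → ℝ) := {y | Function.Injective y ∧ prank y k jmax = (ℓ:ℕ) + 1} with hGdef
  have hInjMeas : MeasurableSet {y : Fin n → ℝ | Function.Injective y} := by
    have heq : {y : Fin n → ℝ | Function.Injective y}
        = ⋂ (i : Fin n), ⋂ (i' : Fin n), ⋂ (_ : i ≠ i'), {y : Fin n → ℝ | y i = y i'}ᶜ := by
      ext y
      simp only [Set.mem_setOf_eq, Set.mem_iInter, Set.mem_compl_iff]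
      constructor
      · intro h i i' hne he; exact hne (h he)
      · intro h a b hab; by_contra hne; exact h a b hne hab
    rw [heq]
    exact MeasurableSet.iInter fun i => MeasurableSet.iInter fun i' =>
      MeasurableSet.iInter fun _ =>
        (measurableSet_eq_fun (measurable_pi_apply i) (measurable_pi_apply i')).compl
  have hGmeas : MeasurableSet G :=
    hInjMeas.inter ((measurable_prank k jmax) (hNat {(ℓ:ℕ)+1}))
  -- the good event has P₁-probability one and is mapped into G
  have hBmeas : MeasurableSet {ω | μ ω k = ℓ} := by
    have heq : {ω | μ ω k = ℓ}
        = ⋃ s ∈ Finset.univ.filter (fun s : Equiv.Perm (Fin n) => s k = ℓ), {ω | μ ω = s} := by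
      ext ω
      simp only [Set.mem_setOf_eq, Set.mem_iUnion, Finset.mem_filter, Finset.mem_univ, true_and]
      constructor
      · intro h; exact ⟨μ ω, h, rfl⟩
      · rintro ⟨s, hs, hμs⟩; rw [hμs]; exact hs
    rw [heq]
    exact Set.Finite.measurableSet_biUnion (Set.toFinite _) (fun s _ => hμmeas s)
  have hXmeas : Measurable X := measurable_pi_iff.mpr hX.1
  have hAmeas : MeasurableSet {ω | Function.Injective (X ω)} := hXmeas hInjMeas
  have hA1 : P₁ {ω | Function.Injective (X ω)} = 1 :=
    prob_eq_one_of_ae P₁ (ae_injective P₁ X hX)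
  have hcap : P₁ ({ω | Function.Injective (X ω)} ∩ {ω | μ ω k = ℓ}) = 1 := by
    have h1 : P₁ ({ω | Function.Injective (X ω)}ᶜ) = 0 := by
      rw [prob_compl_eq_zero_iff hAmeas]; exact hA1
    have h2 : P₁ ({ω | μ ω k = ℓ}ᶜ) = 0 := by
      rw [prob_compl_eq_zero_iff hBmeas]; exact hfix
    have hle : P₁ (({ω | Function.Injective (X ω)} ∩ {ω | μ ω k = ℓ})ᶜ) = 0 := by
      rw [Set.compl_inter]; exact measure_union_null h1 h2
    exact (prob_compl_eq_zero_iff (hAmeas.inter hBmeas)).1 hle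
  have hsubset : {ω | Function.Injective (X ω)} ∩ {ω | μ ω k = ℓ} ⊆ Z ⁻¹' G := by
    rintro ω ⟨hinj, hμk⟩
    have hD : StrictAnti (descArr n (X ω)) := strictAnti_descArr _ hinj
    constructor
    · intro a b hab
      exact (μ ω).injective (hD.injective hab)
    · exact prank_last (X ω) hinj (μ ω) k ℓ hμk npos
  have hZ1 : P₁ (Z ⁻¹' G) = 1 :=
    le_antisymm prob_le_one (hcap ▸ measure_mono hsubset)
  have hY1 : P₂ (Y ⁻¹' G) = 1 := by
    have := congrArg (fun m : Measure (Fin n → ℝ) => m G) hlaw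
    rw [Measure.map_apply hY hGmeas, Measure.map_apply_of_aemeasurable hZae hGmeas] at this
    rw [this]; exact hZ1
  have hYG : ∀ᵐ ω ∂P₂, Y ω ∈ G := by
    rw [MeasureTheory.ae_iff]
    exact (prob_compl_eq_zero_iff (hY hGmeas)).2 hY1
  -- the fold of initial ranks
  set R : ℕ → Ω₂ → ℕ :=
    fun m ω => if h : (k:ℕ) + m < n then irank (Y ω) ⟨(k:ℕ)+m, h⟩ else 0 with hRdef
  have hRmeas : ∀ m, Measurable (R m) := by
    intro m
    by_cases h : (k:ℕ)+m < n
    · have : R m = fun ω => irank (Y ω) ⟨(k:ℕ)+m, h⟩ := by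
        funext ω; simp only [hRdef]; rw [dif_pos h]
      rw [this]; exact (measurable_irank _).comp hY
    · have : R m = fun _ => 0 := by
        funext ω; simp only [hRdef]; rw [dif_neg h]
      rw [this]; exact measurable_const
  have hg : ∀ m, Measurable (fun ω => gseq (fun i => R i ω) m) := by
    intro m
    induction m with
    | zero => exact hRmeas 0
    | succ m ih =>
      have heq : (fun ω => gseq (fun i => R i ω) (m+1))
          = (fun p : ℕ × ℕ => step p.1 p.2) ∘ (fun ω => (R (m+1) ω, gseq (fun i => R i ω) m)) :=
        rfl
      rw [heq]
      exact (measurable_of_countable _).comp ((hRmeas (m+1)).prodMk ih)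
  -- the fold computes partial ranks on the good event
  have hD1 : ∀ ω, Y ω ∈ G → ∀ m, ∀ h : (k:ℕ)+m < n,
      gseq (fun i => R i ω) m = prank (Y ω) k ⟨(k:ℕ)+m, h⟩ := by
    intro ω hωG m
    induction m with
    | zero =>
      intro h
      show R 0 ω = _
      simp only [hRdef]
      rw [dif_pos h]
      have heq : (⟨(k:ℕ)+0, h⟩ : Fin n) = k := Fin.ext (Nat.add_zero _)
      rw [heq]
      exact (prank_self (Y ω) k).symm
    | succ m ih =>
      intro h
      have hm : (k:ℕ)+m < n := by omega
      have hrec := prank_succ (Y ω) hωG.1 k ((k:ℕ)+m) (Nat.le_add_right _ _) h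
      show step (R (m+1) ω) (gseq (fun i => R i ω) m) = _
      have hR : R (m+1) ω = irank (Y ω) ⟨(k:ℕ)+(m+1), h⟩ := by
        simp only [hRdef]; rw [dif_pos h]
      rw [hR, ih hm]
      unfold step
      exact hrec.symm
  -- independence of the fold from the next initial rank
  have hD3 : ∀ m, ∀ h : (k:ℕ)+m+1 < n,
      ProbabilityTheory.IndepFun (R (m+1)) (fun ω => gseq (fun i => R i ω) m) P₂ := by
    intro m h
    set S : Finset {j : Fin n // k ≤ j} :=
      Finset.univ.filter (fun j : {j : Fin n // k ≤ j} => (j.1:ℕ) ≤ (k:ℕ) + m) with hSdef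
    have hT : k ≤ (⟨(k:ℕ)+m+1, h⟩ : Fin n) := by
      rw [Fin.le_def]; show (k:ℕ) ≤ (k:ℕ)+m+1; omega
    set t : {j : Fin n // k ≤ j} := ⟨⟨(k:ℕ)+m+1, h⟩, hT⟩ with htdef
    have hdisj : Disjoint S ({t} : Finset _) := by
      rw [Finset.disjoint_singleton_right, hSdef, Finset.mem_filter]
      rintro ⟨-, hmem⟩
      have hmem' : (k:ℕ)+m+1 ≤ (k:ℕ)+m := hmem
      omega
    have hbase := hind.indepFun_finset S {t} hdisj (fun j => (measurable_irank j.1).comp hY)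
    set φ : (↥S → ℕ) → ℕ := fun v => gseq (fun i =>
      if hi : (k:ℕ)+i < n ∧ i ≤ m then
        v ⟨⟨⟨(k:ℕ)+i, hi.1⟩, by rw [Fin.le_def]; exact Nat.le_add_right _ _⟩, by
          rw [hSdef, Finset.mem_filter]
          exact ⟨Finset.mem_univ _, show (k:ℕ)+i ≤ (k:ℕ)+m from Nat.add_le_add_left hi.2 _⟩⟩
      else 0) m with hφdef
    set ψ : (↥({t} : Finset _) → ℕ) → ℕ := fun v => v ⟨t, Finset.mem_singleton_self t⟩ with hψdef
    have hcomp := (hbase.comp (measurable_of_countable φ) (measurable_of_countable ψ)).symm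
    have heqφ : (φ ∘ (fun a (i : ↥S) => irank (Y a) i.1.1))
        = fun ω => gseq (fun i => R i ω) m := by
      funext ω
      show gseq _ m = gseq _ m
      apply gseq_congr
      intro i hi
      have hki : (k:ℕ)+i < n := by omega
      rw [dif_pos ⟨hki, hi⟩]
      show irank (Y ω) ⟨(k:ℕ)+i, hki⟩ = R i ω
      simp only [hRdef]; rw [dif_pos hki]
    have heqψ : (ψ ∘ (fun a (i : ↥({t} : Finset _)) => irank (Y a) i.1.1)) = R (m+1) := by
      funext ω
      show irank (Y ω) t.1 = R (m+1) ω
      simp only [hRdef]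
      rw [dif_pos (show (k:ℕ)+(m+1) < n from h)]
      rfl
    rw [heqφ, heqψ] at hcomp
    exact hcomp
  -- final prank is a.s. ℓ+1
  have hD2 : ∀ᵐ ω ∂P₂, gseq (fun i => R i ω) (n - 1 - (k:ℕ)) = (ℓ:ℕ)+1 := by
    filter_upwards [hYG] with ω hω
    have h : (k:ℕ) + (n-1-(k:ℕ)) < n := by omega
    rw [hD1 ω hω _ h]
    have heq : (⟨(k:ℕ)+(n-1-(k:ℕ)), h⟩ : Fin n) = jmax :=
      Fin.ext (by show (k:ℕ)+(n-1-(k:ℕ)) = n-1; omega)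
    rw [heq]
    exact hω.2
  -- downward induction
  have hE : ∀ d m, m + d = n - 1 - (k:ℕ) → ∃ c, P₂ {ω | gseq (fun i => R i ω) m = c} = 1 := by
    intro d
    induction d with
    | zero =>
      intro m hm
      rw [Nat.add_zero] at hm
      subst hm
      exact ⟨(ℓ:ℕ)+1, prob_eq_one_of_ae P₂ hD2⟩
    | succ d ih =>
      intro m hm
      obtain ⟨c, hc⟩ := ih (m+1) (by omega)
      have hmn : (k:ℕ) + m + 1 < n := by omega
      have hcae : ∀ᵐ ω ∂P₂, step (R (m+1) ω) (gseq (fun i => R i ω) m) = c := by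
        rw [MeasureTheory.ae_iff]
        exact (prob_ae_iff (p := fun ω => gseq (fun i => R i ω) (m+1) = c) P₂
          ((hg (m+1)) (hNat {c}))).1 hc
      exact const_of_step P₂ (R (m+1)) (fun ω => gseq (fun i => R i ω) m)
        (hRmeas (m+1)) (hg m) (hD3 m hmn) c hcae
  -- conclude
  intro j hkj
  have hkj' : (k:ℕ) ≤ (j:ℕ) := hkj
  have hjn : (j:ℕ) < n := j.isLt
  obtain ⟨c, hc⟩ := hE (n - 1 - (k:ℕ) - ((j:ℕ) - (k:ℕ))) ((j:ℕ) - (k:ℕ)) (by omega)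
  refine ⟨c, ?_⟩
  apply prob_eq_one_of_ae
  have hae : ∀ᵐ ω ∂P₂, gseq (fun i => R i ω) ((j:ℕ) - (k:ℕ)) = c := by
    rw [MeasureTheory.ae_iff]
    exact (prob_ae_iff (p := fun ω => gseq (fun i => R i ω) ((j:ℕ) - (k:ℕ)) = c) P₂
      ((hg _) (hNat {c}))).1 hc
  filter_upwards [hae, hYG] with ω h1 h2
  have hh : (k:ℕ) + ((j:ℕ) - (k:ℕ)) < n := by omega
  have h3 := hD1 ω h2 ((j:ℕ) - (k:ℕ)) hh
  have hjm : (⟨(k:ℕ)+((j:ℕ)-(k:ℕ)), hh⟩ : Fin n) = j :=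
    Fin.ext (by show (k:ℕ)+((j:ℕ)-(k:ℕ)) = (j:ℕ); omega)
  rw [hjm] at h3
  rw [← h3]
  exact h1
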